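/- Let μ be a probability measure on ℝ^d, let s ≠ 0 and σ > 0 be reals, and define g(x) = ∫ exp(−‖x − s·x₀‖²/(2 s² σ²)) dμ(x₀) and m(x) = (∫ x₀ · exp(−‖x − s·x₀‖²/(2 s² σ²)) dμ(x₀)) / g(x). Then g(x) > 0 for every x ∈ ℝ^d, g is differentiable, and for every x ∈ ℝ^d the gradient of log g satisfies ∇ log g(x) = (s·m(x) − x)/(s² σ²). (Tweedie's formula: the score of the Gaussian-smoothed marginal equals (s·E[x₀|x_t] − x_t)/(s²σ²).) -/

import Mathlib

open MeasureTheory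

section Aux

variable {H : Type*} [NormedAddCommGroup H] [InnerProductSpace ℝ H] [CompleteSpace H]

lemma tw_ineq {c : ℝ} (hc : 0 < c) {r : ℝ} (hr : 0 ≤ r) :
    Real.exp (-r ^ 2 / c) * r ≤ Real.sqrt c := by
  have hsq : Real.sqrt c ^ 2 = c := Real.sq_sqrt hc.le
  have hsp : 0 < Real.sqrt c := Real.sqrt_pos.mpr hc
  have h1 : r ^ 2 / c + 1 ≤ Real.exp (r ^ 2 / c) := Real.add_one_le_exp _
  have h2 : Real.exp (-r ^ 2 / c) = (Real.exp (r ^ 2 / c))⁻¹ := by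
    rw [← Real.exp_neg]; ring_nf
  rw [h2]
  rw [inv_mul_le_iff₀ (Real.exp_pos _)]
  have h1' : r ^ 2 + c ≤ c * Real.exp (r ^ 2 / c) := by
    have h := mul_le_mul_of_nonneg_left h1 hc.le
    have : c * (r ^ 2 / c + 1) = r ^ 2 + c := by field_simp
    linarith
  have h4 : Real.sqrt c * r ≤ c * Real.exp (r ^ 2 / c) := by
    nlinarith [sq_nonneg (Real.sqrt c - r), mul_nonneg hsp.le hr]
  rw [← mul_le_mul_iff_right₀ hsp]
  calc Real.sqrt c * r ≤ c * Real.exp (r ^ 2 / c) := h4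
    _ = Real.sqrt c * (Real.exp (r ^ 2 / c) * Real.sqrt c) := by
        linear_combination (-(Real.exp (r ^ 2 / c))) * hsq

lemma tw_fderiv {c : ℝ} (hc : 0 < c) (v x : H) :
    HasFDerivAt (fun y : H => Real.exp (-‖y - v‖ ^ 2 / c))
      ((InnerProductSpace.toDual ℝ H) ((-(2 / c) * Real.exp (-‖x - v‖ ^ 2 / c)) • (x - v))) x := by
  have h1 : HasFDerivAt (fun y : H => y - v) (ContinuousLinearMap.id ℝ H) x :=
    (hasFDerivAt_id x).sub_const v
  have h2 := h1.inner ℝ h1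
  have h3 : HasDerivAt (fun t : ℝ => Real.exp (-t / c))
      (Real.exp (-(inner ℝ (x - v) (x - v) : ℝ) / c) * (-1 / c)) ((inner ℝ (x - v) (x - v) : ℝ)) := by
    have : HasDerivAt (fun t : ℝ => -t / c) (-1 / c) ((inner ℝ (x - v) (x - v) : ℝ)) :=
      ((hasDerivAt_id _).neg).div_const c
    simpa using this.exp
  have key := h3.comp_hasFDerivAt x h2
  simp only [real_inner_self_eq_norm_sq, Function.comp_def] at key
  refine key.congr_fderiv ?_
  ext h
  simp only [InnerProductSpace.toDual_apply_apply, real_inner_smul_left,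
    ContinuousLinearMap.smul_apply, ContinuousLinearMap.coe_comp', Function.comp_apply,
    fderivInnerCLM_apply, ContinuousLinearMap.prod_apply, ContinuousLinearMap.coe_id', id_eq,
    real_inner_comm, real_inner_smul_right, smul_eq_mul]
  ring

lemma tw_bound {c : ℝ} (hc : 0 < c) (v x : H) :
    ‖(-(2 / c) * Real.exp (-‖x - v‖ ^ 2 / c)) • (x - v)‖ ≤ 2 / Real.sqrt c := by
  have hsp : 0 < Real.sqrt c := Real.sqrt_pos.mpr hc
  rw [norm_smul, Real.norm_eq_abs]
  have h1 : Real.exp (-‖x - v‖ ^ 2 / c) * ‖x - v‖ ≤ Real.sqrt c :=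
    tw_ineq hc (norm_nonneg _)
  have habs : |(-(2 / c) * Real.exp (-‖x - v‖ ^ 2 / c))| =
      (2 / c) * Real.exp (-‖x - v‖ ^ 2 / c) := by
    rw [abs_mul, abs_neg, abs_of_pos (by positivity : (0:ℝ) < 2 / c),
      abs_of_pos (Real.exp_pos _)]
  rw [habs, mul_assoc]
  have h2 : (2 / c) * Real.sqrt c = 2 / Real.sqrt c := by
    rw [eq_div_iff hsp.ne', mul_assoc, Real.mul_self_sqrt hc.le]
    field_simp
  calc (2 / c) * (Real.exp (-‖x - v‖ ^ 2 / c) * ‖x - v‖)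
      ≤ (2 / c) * Real.sqrt c := by
        exact mul_le_mul_of_nonneg_left h1 (by positivity)
    _ = 2 / Real.sqrt c := h2

lemma tw_lip {c : ℝ} (hc : 0 < c) (v : H) :
    LipschitzWith (2 / Real.sqrt c).toNNReal
      (fun y : H => Real.exp (-‖y - v‖ ^ 2 / c)) := by
  apply lipschitzWith_of_nnnorm_fderiv_le
    (fun y => (tw_fderiv hc v y).differentiableAt)
  intro y
  rw [(tw_fderiv hc v y).fderiv, ← NNReal.coe_le_coe]
  rw [Real.coe_toNNReal _ (by positivity)]
  calc (‖(InnerProductSpace.toDual ℝ H)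
        ((-(2 / c) * Real.exp (-‖y - v‖ ^ 2 / c)) • (y - v))‖₊ : ℝ)
      = ‖(-(2 / c) * Real.exp (-‖y - v‖ ^ 2 / c)) • (y - v)‖ := by
        rw [coe_nnnorm, LinearIsometryEquiv.norm_map]
    _ ≤ 2 / Real.sqrt c := tw_bound hc v y

end Aux

/-- **Tweedie's formula.** For a probability measure `μ` on `ℝ^d`, `s ≠ 0`, `σ > 0`,
the Gaussian-smoothed density `g` is positive and differentiable, and the score of `log g`
equals `(s • m x - x) / (s² σ²)` where `m` is the posterior mean. -/
theorem tweedie_formula {d : ℕ} (μ : Measure (EuclideanSpace ℝ (Fin d)))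
    [IsProbabilityMeasure μ] (s σ : ℝ) (hs : s ≠ 0) (hσ : 0 < σ)
    (g : EuclideanSpace ℝ (Fin d) → ℝ)
    (hg : ∀ x, g x = ∫ x₀, Real.exp (-‖x - s • x₀‖ ^ 2 / (2 * s ^ 2 * σ ^ 2)) ∂μ)
    (m : EuclideanSpace ℝ (Fin d) → EuclideanSpace ℝ (Fin d))
    (hm : ∀ x, m x = (g x)⁻¹ •
      ∫ x₀, Real.exp (-‖x - s • x₀‖ ^ 2 / (2 * s ^ 2 * σ ^ 2)) • x₀ ∂μ) :
    (∀ x, 0 < g x) ∧ Differentiable ℝ g ∧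
      ∀ x, gradient (fun y => Real.log (g y)) x = (s ^ 2 * σ ^ 2)⁻¹ • (s • m x - x) := by
  set c : ℝ := 2 * s ^ 2 * σ ^ 2 with hcdef
  have hc : (0:ℝ) < c := by positivity
  -- continuity of the integrand in a
  have hecont : ∀ x : EuclideanSpace ℝ (Fin d), Continuous (fun a : EuclideanSpace ℝ (Fin d) => Real.exp (-‖x - s • a‖ ^ 2 / c)) := by
    intro x; fun_prop
  have hele : ∀ (x a : EuclideanSpace ℝ (Fin d)), Real.exp (-‖x - s • a‖ ^ 2 / c) ≤ 1 := by
    intro x a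
    rw [Real.exp_le_one_iff]
    exact div_nonpos_of_nonpos_of_nonneg (neg_nonpos.2 (sq_nonneg _)) hc.le
  have heint : ∀ x : EuclideanSpace ℝ (Fin d), Integrable (fun a : EuclideanSpace ℝ (Fin d) => Real.exp (-‖x - s • a‖ ^ 2 / c)) μ := by
    intro x
    refine (integrable_const (1:ℝ)).mono' (hecont x).aestronglyMeasurable ?_
    filter_upwards with a
    rw [Real.norm_eq_abs, abs_of_pos (Real.exp_pos _)]
    exact hele x a
  -- positivity of g
  have hgpos : ∀ x, 0 < g x := by
    intro x
    rw [hg x]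
    refine (integral_pos_iff_support_of_nonneg_ae
      (Filter.Eventually.of_forall fun a => (Real.exp_pos _).le) (heint x)).mpr ?_
    have hsupp : (Function.support fun a : EuclideanSpace ℝ (Fin d) => Real.exp (-‖x - s • a‖ ^ 2 / c)) = Set.univ :=
      Set.eq_univ_of_forall fun a => (Real.exp_pos _).ne'
    rw [hsupp, measure_univ]
    norm_num
  -- the key derivative computation
  have hkey : ∀ x : EuclideanSpace ℝ (Fin d), HasGradientAt g
      (∫ a, (-(2 / c) * Real.exp (-‖x - s • a‖ ^ 2 / c)) • (x - s • a) ∂μ) x := by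
    intro x
    have hGcont : Continuous
        (fun a : EuclideanSpace ℝ (Fin d) => (-(2 / c) * Real.exp (-‖x - s • a‖ ^ 2 / c)) • (x - s • a)) := by
      fun_prop
    have main := hasFDerivAt_integral_of_dominated_loc_of_lip'
      (F := fun (y : EuclideanSpace ℝ (Fin d)) (a : EuclideanSpace ℝ (Fin d)) => Real.exp (-‖y - s • a‖ ^ 2 / c))
      (F' := fun a : EuclideanSpace ℝ (Fin d) => (InnerProductSpace.toDual ℝ (EuclideanSpace ℝ (Fin d)))
        ((-(2 / c) * Real.exp (-‖x - s • a‖ ^ 2 / c)) • (x - s • a)))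
      (bound := fun _ => 2 / Real.sqrt c) (x₀ := x) (μ := μ)
      (Metric.ball_mem_nhds x one_pos)
      (fun y _ => (hecont y).aestronglyMeasurable)
      (heint x)
      (((InnerProductSpace.toDual ℝ (EuclideanSpace ℝ (Fin d))).continuous.comp hGcont).aestronglyMeasurable)
      ?_ (integrable_const _)
      (Filter.Eventually.of_forall fun a => tw_fderiv hc (s • a) x)
    · have hF := main.2
      have hgeq : g = fun y : EuclideanSpace ℝ (Fin d) => ∫ a, Real.exp (-‖y - s • a‖ ^ 2 / c) ∂μ := funext hg
      have hcomm : (∫ a, (InnerProductSpace.toDual ℝ (EuclideanSpace ℝ (Fin d)))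
            ((-(2 / c) * Real.exp (-‖x - s • a‖ ^ 2 / c)) • (x - s • a)) ∂μ)
          = (InnerProductSpace.toDual ℝ (EuclideanSpace ℝ (Fin d)))
            (∫ a, (-(2 / c) * Real.exp (-‖x - s • a‖ ^ 2 / c)) • (x - s • a) ∂μ) :=
        (InnerProductSpace.toDual ℝ
          (EuclideanSpace ℝ (Fin d))).toLinearIsometry.integral_comp_comm _
      rw [hasGradientAt_iff_hasFDerivAt, ← hcomm, hgeq]
      exact hF
    · filter_upwards with a y _
      have hlip := (tw_lip hc (s • a)).dist_le_mul y x
      rw [dist_eq_norm, dist_eq_norm] at hlip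
      calc ‖Real.exp (-‖y - s • a‖ ^ 2 / c) - Real.exp (-‖x - s • a‖ ^ 2 / c)‖
          ≤ ((2 / Real.sqrt c).toNNReal : ℝ) * ‖y - x‖ := hlip
        _ = 2 / Real.sqrt c * ‖y - x‖ := by
            rw [Real.coe_toNNReal _ (by positivity)]
  refine ⟨hgpos, fun x => (hkey x).differentiableAt, fun x => ?_⟩
  -- gradient of log g
  have hlog : HasGradientAt (fun y => Real.log (g y))
      ((g x)⁻¹ • ∫ a, (-(2 / c) * Real.exp (-‖x - s • a‖ ^ 2 / c)) • (x - s • a) ∂μ) x := by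
    rw [hasGradientAt_iff_hasFDerivAt, LinearIsometryEquiv.map_smul]
    exact ((hkey x).hasFDerivAt).log (hgpos x).ne'
  rw [hlog.gradient]
  -- algebraic computation of the integral
  have hint1 : Integrable (fun a : EuclideanSpace ℝ (Fin d) => Real.exp (-‖x - s • a‖ ^ 2 / c) • x) μ :=
    (heint x).smul_const x
  have hint2 : Integrable (fun a : EuclideanSpace ℝ (Fin d) => Real.exp (-‖x - s • a‖ ^ 2 / c) • a) μ := by
    refine (integrable_const ((Real.sqrt c + ‖x‖) / |s|)).mono'
      (by fun_prop : Continuous fun a : EuclideanSpace ℝ (Fin d) => Real.exp (-‖x - s • a‖ ^ 2 / c) • a).aestronglyMeasurable ?_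
    filter_upwards with a
    rw [norm_smul, Real.norm_eq_abs, abs_of_pos (Real.exp_pos _),
      le_div_iff₀ (abs_pos.2 hs)]
    have htri : ‖s • a‖ ≤ ‖x - s • a‖ + ‖x‖ := by
      have := norm_sub_le x (x - s • a)
      simpa [norm_sub_rev] using this.trans (by rw [add_comm])
    calc Real.exp (-‖x - s • a‖ ^ 2 / c) * ‖a‖ * |s|
        = Real.exp (-‖x - s • a‖ ^ 2 / c) * ‖s • a‖ := by
          rw [norm_smul, Real.norm_eq_abs]; ring
      _ ≤ Real.exp (-‖x - s • a‖ ^ 2 / c) * (‖x - s • a‖ + ‖x‖) :=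
          mul_le_mul_of_nonneg_left htri (Real.exp_pos _).le
      _ = Real.exp (-‖x - s • a‖ ^ 2 / c) * ‖x - s • a‖
          + Real.exp (-‖x - s • a‖ ^ 2 / c) * ‖x‖ := mul_add _ _ _
      _ ≤ Real.sqrt c + 1 * ‖x‖ := add_le_add (tw_ineq hc (norm_nonneg _))
          (mul_le_mul_of_nonneg_right (hele x a) (norm_nonneg _))
      _ = Real.sqrt c + ‖x‖ := by ring
  have hsplit : (fun a : EuclideanSpace ℝ (Fin d) => (-(2 / c) * Real.exp (-‖x - s • a‖ ^ 2 / c)) • (x - s • a))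
      = fun a : EuclideanSpace ℝ (Fin d) => (-(2 / c)) • (Real.exp (-‖x - s • a‖ ^ 2 / c) • x
        - s • (Real.exp (-‖x - s • a‖ ^ 2 / c) • a)) := by
    funext a
    module
  have hint2' : Integrable (fun a : EuclideanSpace ℝ (Fin d) =>
      s • (Real.exp (-‖x - s • a‖ ^ 2 / c) • a)) μ := hint2.smul s
  rw [hsplit, integral_smul, integral_sub hint1 hint2', integral_smul,
    integral_smul_const, ← hg x]
  rw [smul_comm ((g x)⁻¹) (-(2/c) : ℝ), smul_sub, inv_smul_smul₀ (hgpos x).ne',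
    smul_comm ((g x)⁻¹) s, ← hm x]
  have hsc : -(2 / c) = -((s ^ 2 * σ ^ 2)⁻¹) := by
    rw [hcdef]; field_simp
  rw [hsc]
  module
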